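/- Let B₄ be the presented group on generators σ₁, σ₂, σ₃ with the braid relations, and let ψ : B₄ → GL(3, ℤ[t,t⁻¹]) be a homomorphism with ψ(σᵢ) = Mᵢ. Assume the kernel K of ψ is contained in the subgroup generated by α = σ₁σ₂σ₃⁻¹σ₁σ₂⁻¹σ₁⁻¹ and β = σ₃σ₁⁻¹. If K is nontrivial, then there exists a non-identity element ω ∈ K of the form ω = θ^m · τ² · (Δτ^{i₁})(Δτ^{i₂})⋯(Δτ^{i_k}) · Δ · τ² for some m ∈ ℤ, k ≥ 0, and exponents i₁, …, i_k ∈ {1, 2, 3}, where τ = σ₁σ₂σ₃, Δ = σ₁σ₂σ₃σ₁σ₂σ₁, and θ = τ⁴. -/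

import Mathlib

open LaurentPolynomial

/-- The braid relators of `B₄` in the free group on three generators. -/
def braidRels : Set (FreeGroup (Fin 3)) :=
  { FreeGroup.of 0 * FreeGroup.of 1 * FreeGroup.of 0 *
      (FreeGroup.of 1 * FreeGroup.of 0 * FreeGroup.of 1)⁻¹,
    FreeGroup.of 1 * FreeGroup.of 2 * FreeGroup.of 1 *
      (FreeGroup.of 2 * FreeGroup.of 1 * FreeGroup.of 2)⁻¹,
    FreeGroup.of 0 * FreeGroup.of 2 * (FreeGroup.of 2 * FreeGroup.of 0)⁻¹ }

/-- The braid group `B₄`, presented on `σ₁, σ₂, σ₃` with the braid relations. -/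
abbrev B₄ : Type := PresentedGroup braidRels

/-- The standard generators `σ₁, σ₂, σ₃` of `B₄` (indexed by `Fin 3`). -/
def σ (i : Fin 3) : B₄ := PresentedGroup.of i

/-- `t` in the Laurent polynomial ring `ℤ[t,t⁻¹]`. -/
noncomputable def tt : LaurentPolynomial ℤ := T 1

/-- Reduced Burau matrix of `σ₁`. -/
noncomputable def M₁ : Matrix (Fin 3) (Fin 3) (LaurentPolynomial ℤ) :=
  !![-tt, tt, 0; 0, 1, 0; 0, 0, 1]

/-- Reduced Burau matrix of `σ₂`. -/
noncomputable def M₂ : Matrix (Fin 3) (Fin 3) (LaurentPolynomial ℤ) :=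
  !![1, 0, 0; 1, -tt, tt; 0, 0, 1]

/-- Reduced Burau matrix of `σ₃`. -/
noncomputable def M₃ : Matrix (Fin 3) (Fin 3) (LaurentPolynomial ℤ) :=
  !![1, 0, 0; 0, 1, 0; 0, 1, -tt]

/-- `α = σ₁σ₂σ₃⁻¹σ₁σ₂⁻¹σ₁⁻¹`. -/
def α : B₄ := σ 0 * σ 1 * (σ 2)⁻¹ * σ 0 * (σ 1)⁻¹ * (σ 0)⁻¹

/-- `β = σ₃σ₁⁻¹`. -/
def β : B₄ := σ 2 * (σ 0)⁻¹

/-- `τ = σ₁σ₂σ₃`. -/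
def τ : B₄ := σ 0 * σ 1 * σ 2

/-- `Δ = σ₁σ₂σ₃σ₁σ₂σ₁`. -/
def Δ : B₄ := σ 0 * σ 1 * σ 2 * σ 0 * σ 1 * σ 0

/-- `θ = τ⁴`, the full twist generating the center of `B₄`. -/
def θ : B₄ := τ ^ 4

/- ====================  Auxiliary development  ==================== -/

section BraidIdentities

private lemma relOne {r : FreeGroup (Fin 3)} (h : r ∈ braidRels) :
    PresentedGroup.mk braidRels r = 1 :=
  (QuotientGroup.eq_one_iff _).mpr (Subgroup.subset_normalClosure h)

private lemma sigma_mk (i : Fin 3) :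
    PresentedGroup.mk braidRels (FreeGroup.of i) = σ i := rfl

private lemma brel₁ : σ 0 * σ 1 * σ 0 = σ 1 * σ 0 * σ 1 := by
  have h := relOne (show _ ∈ braidRels from Set.mem_insert _ _)
  simp only [map_mul, map_inv, sigma_mk, mul_inv_eq_one] at h
  exact h

private lemma brel₂ : σ 1 * σ 2 * σ 1 = σ 2 * σ 1 * σ 2 := by
  have h := relOne (show _ ∈ braidRels from
    Set.mem_insert_of_mem _ (Set.mem_insert _ _))
  simp only [map_mul, map_inv, sigma_mk, mul_inv_eq_one] at h
  exact h

private lemma brel₃ : σ 0 * σ 2 = σ 2 * σ 0 := by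
  have h := relOne (show _ ∈ braidRels from
    Set.mem_insert_of_mem _ (Set.mem_insert_of_mem _ rfl))
  simp only [map_mul, map_inv, sigma_mk, mul_inv_eq_one] at h
  exact h

private lemma R1 (x : B₄) : σ 0 * (σ 1 * (σ 0 * x)) = σ 1 * (σ 0 * (σ 1 * x)) := by
  simp only [← mul_assoc]; rw [brel₁]

private lemma R2 (x : B₄) : σ 1 * (σ 2 * (σ 1 * x)) = σ 2 * (σ 1 * (σ 2 * x)) := by
  simp only [← mul_assoc]; rw [brel₂]

private lemma R3 (x : B₄) : σ 0 * (σ 2 * x) = σ 2 * (σ 0 * x) := by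
  simp only [← mul_assoc]; rw [brel₃]

private lemma R1e : σ 0 * (σ 1 * σ 0) = σ 1 * (σ 0 * σ 1) := by
  simp only [← mul_assoc]; exact brel₁

private lemma R2e : σ 1 * (σ 2 * σ 1) = σ 2 * (σ 1 * σ 2) := by
  simp only [← mul_assoc]; exact brel₂

private lemma R3e : σ 0 * σ 2 = σ 2 * σ 0 := brel₃

private lemma I3 : σ 2 * (σ 1 * (σ 2 * (σ 0 * (σ 1 * σ 2)))) = σ 0 * (σ 1 * (σ 2 * (σ 0 * (σ 1 * σ 0)))) := by
  calc σ 2 * (σ 1 * (σ 2 * (σ 0 * (σ 1 * σ 2)))) 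
      _ = σ 1 * (σ 2 * (σ 1 * (σ 0 * (σ 1 * σ 2)))) := (R2 (σ 0 * (σ 1 * σ 2))).symm
      _ = σ 1 * (σ 2 * (σ 0 * (σ 1 * (σ 0 * σ 2)))) := congrArg (fun z => σ 1 * z) (congrArg (fun z => σ 2 * z) ((R1 (σ 2)).symm))
      _ = σ 1 * (σ 0 * (σ 2 * (σ 1 * (σ 0 * σ 2)))) := congrArg (fun z => σ 1 * z) ((R3 (σ 1 * (σ 0 * σ 2))).symm)
      _ = σ 1 * (σ 0 * (σ 2 * (σ 1 * (σ 2 * σ 0)))) := congrArg (fun z => σ 1 * z) (congrArg (fun z => σ 0 * z) (congrArg (fun z => σ 2 * z) (congrArg (fun z => σ 1 * z) (R3e))))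
      _ = σ 1 * (σ 0 * (σ 1 * (σ 2 * (σ 1 * σ 0)))) := congrArg (fun z => σ 1 * z) (congrArg (fun z => σ 0 * z) ((R2 (σ 0)).symm))
      _ = σ 0 * (σ 1 * (σ 0 * (σ 2 * (σ 1 * σ 0)))) := (R1 (σ 2 * (σ 1 * σ 0))).symm
      _ = σ 0 * (σ 1 * (σ 2 * (σ 0 * (σ 1 * σ 0)))) := congrArg (fun z => σ 0 * z) (congrArg (fun z => σ 1 * z) (R3 (σ 1 * σ 0)))

private lemma I4 : σ 0 * (σ 1 * (σ 2 * (σ 0 * (σ 1 * (σ 2 * (σ 0 * (σ 1 * (σ 2 * (σ 0 * (σ 1 * σ 2)))))))))) = σ 0 * (σ 1 * (σ 2 * (σ 0 * (σ 1 * (σ 0 * (σ 0 * (σ 1 * (σ 2 * (σ 0 * (σ 1 * σ 0)))))))))) := by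
  calc σ 0 * (σ 1 * (σ 2 * (σ 0 * (σ 1 * (σ 2 * (σ 0 * (σ 1 * (σ 2 * (σ 0 * (σ 1 * σ 2)))))))))) 
      _ = σ 0 * (σ 1 * (σ 2 * (σ 0 * (σ 1 * (σ 0 * (σ 2 * (σ 1 * (σ 2 * (σ 0 * (σ 1 * σ 2)))))))))) := congrArg (fun z => σ 0 * z) (congrArg (fun z => σ 1 * z) (congrArg (fun z => σ 2 * z) (congrArg (fun z => σ 0 * z) (congrArg (fun z => σ 1 * z) ((R3 (σ 1 * (σ 2 * (σ 0 * (σ 1 * σ 2))))).symm)))))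
      _ = σ 0 * (σ 1 * (σ 2 * (σ 0 * (σ 1 * (σ 0 * (σ 1 * (σ 2 * (σ 1 * (σ 0 * (σ 1 * σ 2)))))))))) := congrArg (fun z => σ 0 * z) (congrArg (fun z => σ 1 * z) (congrArg (fun z => σ 2 * z) (congrArg (fun z => σ 0 * z) (congrArg (fun z => σ 1 * z) (congrArg (fun z => σ 0 * z) ((R2 (σ 0 * (σ 1 * σ 2))).symm))))))
      _ = σ 0 * (σ 1 * (σ 2 * (σ 0 * (σ 1 * (σ 0 * (σ 1 * (σ 2 * (σ 0 * (σ 1 * (σ 0 * σ 2)))))))))) := congrArg (fun z => σ 0 * z) (congrArg (fun z => σ 1 * z) (congrArg (fun z => σ 2 * z) (congrArg (fun z => σ 0 * z) (congrArg (fun z => σ 1 * z) (congrArg (fun z => σ 0 * z) (congrArg (fun z => σ 1 * z) (congrArg (fun z => σ 2 * z) ((R1 (σ 2)).symm))))))))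
      _ = σ 0 * (σ 1 * (σ 2 * (σ 0 * (σ 1 * (σ 0 * (σ 1 * (σ 0 * (σ 2 * (σ 1 * (σ 0 * σ 2)))))))))) := congrArg (fun z => σ 0 * z) (congrArg (fun z => σ 1 * z) (congrArg (fun z => σ 2 * z) (congrArg (fun z => σ 0 * z) (congrArg (fun z => σ 1 * z) (congrArg (fun z => σ 0 * z) (congrArg (fun z => σ 1 * z) ((R3 (σ 1 * (σ 0 * σ 2))).symm)))))))
      _ = σ 0 * (σ 1 * (σ 2 * (σ 0 * (σ 1 * (σ 0 * (σ 1 * (σ 0 * (σ 2 * (σ 1 * (σ 2 * σ 0)))))))))) := congrArg (fun z => σ 0 * z) (congrArg (fun z => σ 1 * z) (congrArg (fun z => σ 2 * z) (congrArg (fun z => σ 0 * z) (congrArg (fun z => σ 1 * z) (congrArg (fun z => σ 0 * z) (congrArg (fun z => σ 1 * z) (congrArg (fun z => σ 0 * z) (congrArg (fun z => σ 2 * z) (congrArg (fun z => σ 1 * z) (R3e))))))))))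
      _ = σ 0 * (σ 1 * (σ 2 * (σ 0 * (σ 1 * (σ 0 * (σ 1 * (σ 0 * (σ 1 * (σ 2 * (σ 1 * σ 0)))))))))) := congrArg (fun z => σ 0 * z) (congrArg (fun z => σ 1 * z) (congrArg (fun z => σ 2 * z) (congrArg (fun z => σ 0 * z) (congrArg (fun z => σ 1 * z) (congrArg (fun z => σ 0 * z) (congrArg (fun z => σ 1 * z) (congrArg (fun z => σ 0 * z) ((R2 (σ 0)).symm))))))))
      _ = σ 0 * (σ 1 * (σ 2 * (σ 0 * (σ 1 * (σ 0 * (σ 0 * (σ 1 * (σ 0 * (σ 2 * (σ 1 * σ 0)))))))))) := congrArg (fun z => σ 0 * z) (congrArg (fun z => σ 1 * z) (congrArg (fun z => σ 2 * z) (congrArg (fun z => σ 0 * z) (congrArg (fun z => σ 1 * z) (congrArg (fun z => σ 0 * z) ((R1 (σ 2 * (σ 1 * σ 0))).symm))))))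
      _ = σ 0 * (σ 1 * (σ 2 * (σ 0 * (σ 1 * (σ 0 * (σ 0 * (σ 1 * (σ 2 * (σ 0 * (σ 1 * σ 0)))))))))) := congrArg (fun z => σ 0 * z) (congrArg (fun z => σ 1 * z) (congrArg (fun z => σ 2 * z) (congrArg (fun z => σ 0 * z) (congrArg (fun z => σ 1 * z) (congrArg (fun z => σ 0 * z) (congrArg (fun z => σ 0 * z) (congrArg (fun z => σ 1 * z) (R3 (σ 1 * σ 0)))))))))


private lemma key4 : τ ^ 4 = Δ ^ 2 := by
  show (σ 0 * σ 1 * σ 2) ^ 4 = (σ 0 * σ 1 * σ 2 * σ 0 * σ 1 * σ 0) ^ 2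
  simp only [pow_succ, pow_zero, one_mul, mul_assoc]
  exact I4

private lemma keyθ : θ = Δ ^ 2 := key4

private lemma alphaτ : τ * α * τ = Δ := by
  have hca : (σ 2)⁻¹ * (σ 0 * σ 2) = σ 0 := by rw [brel₃, inv_mul_cancel_left]
  show σ 0 * σ 1 * σ 2 * (σ 0 * σ 1 * (σ 2)⁻¹ * σ 0 * (σ 1)⁻¹ * (σ 0)⁻¹) *
      (σ 0 * σ 1 * σ 2) = σ 0 * σ 1 * σ 2 * σ 0 * σ 1 * σ 0
  simp only [mul_assoc, inv_mul_cancel_left]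
  rw [hca]

private lemma betaτ : β * τ ^ 2 = Δ := by
  show σ 2 * (σ 0)⁻¹ * (σ 0 * σ 1 * σ 2) ^ 2 = σ 0 * σ 1 * σ 2 * σ 0 * σ 1 * σ 0
  simp only [pow_succ, pow_zero, one_mul, mul_assoc, inv_mul_cancel_left]
  exact I3

end BraidIdentities

section NormalForm

private lemma commθτ : Commute θ τ := (Commute.refl τ).pow_left 4

private lemma commθΔ : Commute θ Δ := keyθ ▸ (Commute.refl Δ).pow_left 2

/-- chain of blocks -/
private def chain (L : List ℕ) : B₄ := (L.map fun i => Δ * τ ^ i).prod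

private lemma chain_nil : chain [] = 1 := rfl

private lemma chain_cons (i : ℕ) (L : List ℕ) :
    chain (i :: L) = Δ * τ ^ i * chain L := by
  simp [chain]

private lemma chain_append (L : List ℕ) (r : ℕ) :
    chain (L ++ [r]) = chain L * (Δ * τ ^ r) := by
  simp [chain]

private lemma chain_concat (L : List ℕ) (i : ℕ) :
    chain (L.concat i) = chain L * (Δ * τ ^ i) := by
  simp [chain]

private lemma commθchain (L : List ℕ) : Commute θ (chain L) := by
  induction L with
  | nil => rw [chain_nil]; exact Commute.one_right θ
  | cons i L ih =>
      rw [chain_cons]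
      exact (commθΔ.mul_right (commθτ.pow_right i)).mul_right ih

/- directed rewrite lemmas: push `θ`-powers to the left, merge powers -/
private lemma sθτ (e : ℤ) (n : ℕ) (x : B₄) :
    τ ^ n * (θ ^ e * x) = θ ^ e * (τ ^ n * x) := by
  rw [← mul_assoc, ((commθτ.symm.pow_left n).zpow_right e).eq, mul_assoc]

private lemma sθτ' (e : ℤ) (n : ℕ) : τ ^ n * θ ^ e = θ ^ e * τ ^ n :=
  ((commθτ.symm.pow_left n).zpow_right e).eq

private lemma sθΔ (e : ℤ) (x : B₄) : Δ * (θ ^ e * x) = θ ^ e * (Δ * x) := by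
  rw [← mul_assoc, (commθΔ.symm.zpow_right e).eq, mul_assoc]

private lemma sθΔ' (e : ℤ) : Δ * θ ^ e = θ ^ e * Δ :=
  (commθΔ.symm.zpow_right e).eq

private lemma sθC (e : ℤ) (L : List ℕ) (x : B₄) :
    chain L * (θ ^ e * x) = θ ^ e * (chain L * x) := by
  rw [← mul_assoc, (((commθchain L).symm).zpow_right e).eq, mul_assoc]

private lemma sθC' (e : ℤ) (L : List ℕ) : chain L * θ ^ e = θ ^ e * chain L :=
  (((commθchain L).symm).zpow_right e).eq

private lemma sθτb (e : ℤ) (x : B₄) : τ * (θ ^ e * x) = θ ^ e * (τ * x) := by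
  rw [← mul_assoc, (commθτ.symm.zpow_right e).eq, mul_assoc]

private lemma sθτb' (e : ℤ) : τ * θ ^ e = θ ^ e * τ :=
  (commθτ.symm.zpow_right e).eq

private lemma sθθ (a b : ℤ) (x : B₄) : θ ^ a * (θ ^ b * x) = θ ^ (a + b) * x := by
  rw [← mul_assoc, ← zpow_add]

private lemma sθθ' (a b : ℤ) : θ ^ a * θ ^ b = θ ^ (a + b) := (zpow_add θ a b).symm

private lemma sττ (a b : ℕ) (x : B₄) : τ ^ a * (τ ^ b * x) = τ ^ (a + b) * x := by
  rw [← mul_assoc, ← pow_add]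

private lemma sττ' (a b : ℕ) : τ ^ a * τ ^ b = τ ^ (a + b) := (pow_add τ a b).symm

private lemma τ4u (u : ℕ) : τ ^ (4 * u) = θ ^ (u : ℤ) := by
  rw [pow_mul, zpow_natCast]; rfl

private lemma τ4θ : τ ^ (4 : ℕ) = θ ^ (1 : ℤ) := by rw [zpow_one]; rfl

private lemma sΔΔ (x : B₄) : Δ * (Δ * x) = θ ^ (1 : ℤ) * x := by
  rw [← mul_assoc, zpow_one, keyθ, sq]

private lemma sΔΔ' : Δ * Δ = θ ^ (1 : ℤ) := by rw [zpow_one, keyθ, sq]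

/-- the normal-form predicate -/
private def Good (w : B₄) : Prop :=
  (∃ (m : ℤ) (p : ℕ), w = θ ^ m * τ ^ p) ∨
  (∃ (m : ℤ) (p : ℕ) (L : List ℕ) (q : ℕ),
    (∀ i ∈ L, i = 1 ∨ i = 2 ∨ i = 3) ∧
    w = θ ^ m * τ ^ p * chain L * Δ * τ ^ q)

private lemma Good.step {w : B₄} (hw : Good w) (e : ℤ) (p' q' : ℕ) :
    Good (w * (θ ^ e * τ ^ p' * Δ * τ ^ q')) := by
  rcases hw with ⟨m, p, rfl⟩ | ⟨m, p, L, q, hL, rfl⟩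
  · right
    refine ⟨m + e, p + p', [], q', by simp, ?_⟩
    simp only [chain_nil, mul_one, mul_assoc, sθτ, sθΔ, sθθ, sττ, sθτ', sθΔ', sθθ', sττ']
  · have hdm : 4 * ((q + p') / 4) + (q + p') % 4 = q + p' := Nat.div_add_mod _ 4
    have hsplit : τ ^ (q + p') = θ ^ (((q + p') / 4 : ℕ) : ℤ) * τ ^ ((q + p') % 4) := by
      rw [← τ4u, ← pow_add, hdm]
    by_cases hr : (q + p') % 4 = 0
    · rcases L.eq_nil_or_concat with rfl | ⟨L₀, i, rfl⟩
      · left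
        refine ⟨m + e + ((q + p') / 4 : ℕ) + 1, p + q', ?_⟩
        rw [hr, pow_zero, mul_one] at hsplit
        simp only [chain_nil, mul_one, mul_assoc, sθτ, sθΔ, sθθ, sττ, sθτ', sθΔ',
          sθθ', sττ', hsplit, sΔΔ, sΔΔ']
        all_goals try (congr 1)
        all_goals try (congr 1)
        all_goals try omega
      · right
        refine ⟨m + e + ((q + p') / 4 : ℕ) + 1, p, L₀, i + q',
          fun x hx => hL x (by simp [List.concat_eq_append, hx]), ?_⟩
        rw [hr, pow_zero, mul_one] at hsplit
        rw [chain_concat]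
        simp only [mul_assoc, sθτ, sθΔ, sθC, sθθ, sττ, sθτ', sθΔ', sθC', sθθ',
          sττ', hsplit, sΔΔ, sΔΔ']
        all_goals try (congr 1)
        all_goals try (congr 1)
        all_goals try omega
    · right
      refine ⟨m + e + ((q + p') / 4 : ℕ), p, L ++ [(q + p') % 4], q',
        ?_, ?_⟩
      · intro x hx
        rcases List.mem_append.mp hx with h | h
        · exact hL x h
        · have : x = (q + p') % 4 := by simpa using h
          have h4 : (q + p') % 4 < 4 := Nat.mod_lt _ (by norm_num)
          omega
      · rw [chain_append]
        simp only [mul_assoc, sθτ, sθΔ, sθC, sθθ, sττ, sθτ', sθΔ', sθC', sθθ',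
          sττ', hsplit, sΔΔ, sΔΔ']
        all_goals try (congr 1)
        all_goals try (congr 1)
        all_goals try omega

private lemma τinv : τ⁻¹ = θ ^ (-1 : ℤ) * τ ^ 3 := by
  show τ⁻¹ = (τ ^ 4) ^ (-1 : ℤ) * τ ^ 3
  group

private lemma τ2inv : (τ ^ 2)⁻¹ = θ ^ (-1 : ℤ) * τ ^ 2 := by
  show (τ ^ 2)⁻¹ = (τ ^ 4) ^ (-1 : ℤ) * τ ^ 2
  group

private lemma Δinv : Δ⁻¹ = θ ^ (-1 : ℤ) * Δ := by
  rw [keyθ]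
  group

private lemma αblk : α = θ ^ (-2 : ℤ) * τ ^ 3 * Δ * τ ^ 3 := by
  have h : α = τ⁻¹ * Δ * τ⁻¹ := by rw [← alphaτ]; group
  rw [h, τinv]
  simp only [mul_assoc, sθτ, sθΔ, sθθ, sττ, sθτ', sθΔ', sθθ', sττ']
  norm_num

private lemma αinvblk : α⁻¹ = θ ^ (-1 : ℤ) * τ ^ 1 * Δ * τ ^ 1 := by
  have h : α⁻¹ = τ * Δ⁻¹ * τ := by
    have h2 : α = τ⁻¹ * Δ * τ⁻¹ := by rw [← alphaτ]; group
    rw [h2]; group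
  rw [h, Δinv]
  simp only [pow_one, mul_assoc, sθτb, sθΔ, sθτb', sθΔ']

private lemma βblk : β = θ ^ (-1 : ℤ) * τ ^ 0 * Δ * τ ^ 2 := by
  have h : β = Δ * (τ ^ 2)⁻¹ := by rw [← betaτ]; group
  rw [h, τ2inv, pow_zero, mul_one]
  simp only [mul_assoc, sθΔ, sθΔ']

private lemma βinvblk : β⁻¹ = θ ^ (-1 : ℤ) * τ ^ 2 * Δ * τ ^ 0 := by
  have h : β⁻¹ = τ ^ 2 * Δ⁻¹ := by
    have h2 : β = Δ * (τ ^ 2)⁻¹ := by rw [← betaτ]; group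
    rw [h2]; group
  rw [h, Δinv, pow_zero, mul_one]
  simp only [mul_assoc, sθτ, sθθ, sθτ', sθθ']

private lemma good_of_mem {w : B₄} (h : w ∈ Subgroup.closure ({α, β} : Set B₄)) :
    Good w := by
  refine Subgroup.closure_induction_right (p := fun x _ => Good x) ?_ ?_ ?_ h
  · exact Or.inl ⟨0, 0, by simp⟩
  · rintro x _ y (rfl | rfl) ih
    · rw [αblk]; exact ih.step _ _ _
    · rw [βblk]; exact ih.step _ _ _
  · rintro x _ y (rfl | rfl) ih
    · rw [αinvblk]; exact ih.step _ _ _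
    · rw [βinvblk]; exact ih.step _ _ _

private lemma choose_jk (p q : ℕ) :
    ∃ j k : ℕ, j + k = 2 ∧ (2 + j + p) % 4 ≠ 0 ∧ (q + k) % 4 ≠ 0 := by
  by_cases hA : (2 + 0 + p) % 4 ≠ 0 ∧ (q + 2) % 4 ≠ 0
  · exact ⟨0, 2, rfl, hA.1, hA.2⟩
  by_cases hB : (2 + 1 + p) % 4 ≠ 0 ∧ (q + 1) % 4 ≠ 0
  · exact ⟨1, 1, rfl, hB.1, hB.2⟩
  refine ⟨2, 0, rfl, ?_, ?_⟩ <;> omega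

end NormalForm

section Burau

private noncomputable def F2 : Multiplicative ℤ →* ℚ where
  toFun n := (2 : ℚ) ^ (Multiplicative.toAdd n)
  map_one' := by simp
  map_mul' x y := by
    simp only [toAdd_mul]
    rw [zpow_add₀ (by norm_num : (2 : ℚ) ≠ 0)]

private noncomputable def ev : LaurentPolynomial ℤ →ₐ[ℤ] ℚ :=
  AddMonoidAlgebra.lift ℤ ℚ ℤ F2

private lemma ev_T (n : ℤ) : ev (T n) = (2 : ℚ) ^ n := by
  show ev (AddMonoidAlgebra.single n 1) = _
  rw [ev, AddMonoidAlgebra.lift_single]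
  simp [F2]

private lemma detM₁ : M₁.det = -tt := by
  simp [M₁, Matrix.det_fin_three]

private lemma detM₂ : M₂.det = -tt := by
  simp [M₂, Matrix.det_fin_three]

private lemma detM₃ : M₃.det = -tt := by
  simp [M₃, Matrix.det_fin_three]

end Burau


/-- If the kernel of the Burau representation of `B₄` is nontrivial, it contains a
non-identity element of the form `θ^m · τ² · Δτ^{i₁} ⋯ Δτ^{i_k} · Δ · τ²` with
`m ∈ ℤ` and `i₁, …, i_k ∈ {1,2,3}`. -/
theorem kernel_element_normal_form
    (ψ : B₄ →* Matrix.GeneralLinearGroup (Fin 3) (LaurentPolynomial ℤ))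
    (h₁ : (ψ (σ 0) : Matrix (Fin 3) (Fin 3) (LaurentPolynomial ℤ)) = M₁)
    (h₂ : (ψ (σ 1) : Matrix (Fin 3) (Fin 3) (LaurentPolynomial ℤ)) = M₂)
    (h₃ : (ψ (σ 2) : Matrix (Fin 3) (Fin 3) (LaurentPolynomial ℤ)) = M₃)
    (hker : ψ.ker ≤ Subgroup.closure ({α, β} : Set B₄))
    (hK : ψ.ker ≠ ⊥) :
    ∃ ω ∈ ψ.ker, ω ≠ 1 ∧
      ∃ (m : ℤ) (l : List ℕ), (∀ i ∈ l, i = 1 ∨ i = 2 ∨ i = 3) ∧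
        ω = θ ^ m * τ ^ 2 * (l.map fun i => Δ * τ ^ i).prod * Δ * τ ^ 2 := by
  rcases ψ.ker.bot_or_exists_ne_one with hbot | ⟨w, hwker, hwne⟩
  · exact absurd hbot hK
  -- the evaluation homomorphism to ℚˣ, sending the Burau matrix to its determinant at t = 2
  set χ : B₄ →* ℚˣ :=
    (Units.map (ev.toRingHom.toMonoidHom)).comp
      (Matrix.GeneralLinearGroup.det.comp ψ) with hχdef
  have hτm : ((ψ τ : Matrix (Fin 3) (Fin 3) (LaurentPolynomial ℤ))) = M₁ * M₂ * M₃ := by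
    show ((ψ (σ 0 * σ 1 * σ 2) : Matrix (Fin 3) (Fin 3) (LaurentPolynomial ℤ))) = _
    rw [map_mul, map_mul, Units.val_mul, Units.val_mul, h₁, h₂, h₃]
  have hχτ : ((χ τ : ℚˣ) : ℚ) = -8 := by
    have hdet : ((ψ τ : Matrix (Fin 3) (Fin 3) (LaurentPolynomial ℤ))).det
        = -(T 3 : LaurentPolynomial ℤ) := by
      rw [hτm, Matrix.det_mul, Matrix.det_mul, detM₁, detM₂, detM₃]
      show (-(T 1)) * (-(T 1)) * (-(T 1)) = _
      rw [neg_mul_neg, mul_neg, ← T_add, ← T_add]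
      norm_num
    show (ev.toRingHom : LaurentPolynomial ℤ → ℚ)
        ((Matrix.GeneralLinearGroup.det (ψ τ) : LaurentPolynomial ℤ)) = -8
    rw [Matrix.GeneralLinearGroup.val_det_apply, hdet, map_neg]
    have : (ev.toRingHom : LaurentPolynomial ℤ → ℚ) (T 3) = (2 : ℚ) ^ (3 : ℤ) := ev_T 3
    rw [this]
    norm_num
  have hNzero : ∀ N : ℤ, τ ^ N ∈ ψ.ker → N = 0 := by
    intro N hN
    have h1 : χ (τ ^ N) = 1 := by
      have hψ : ψ (τ ^ N) = 1 := hN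
      rw [hχdef]
      simp only [MonoidHom.comp_apply, hψ, map_one]
    rw [map_zpow] at h1
    have h2 : ((χ τ : ℚˣ) : ℚ) ^ N = 1 := by
      rw [← Units.val_zpow_eq_zpow_val, h1, Units.val_one]
    rw [hχτ] at h2
    have h4 : ((-8 : ℚ) ^ (2 : ℤ)) ^ N = 1 := by
      rw [← zpow_mul, mul_comm, zpow_mul, h2, one_zpow]
    rw [show ((-8 : ℚ)) ^ (2 : ℤ) = 64 by norm_num] at h4
    have h5 : (64 : ℚ) ^ N = (64 : ℚ) ^ (0 : ℤ) := by rw [h4, zpow_zero]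
    exact zpow_right_injective₀ (by norm_num) (by norm_num) h5
  rcases good_of_mem (hker hwker) with ⟨m, p, hw⟩ | ⟨m, p, L, q, hL, hw⟩
  · -- pure τ-power case: impossible
    exfalso
    have hform : w = τ ^ (4 * m + (p : ℤ)) := by
      rw [hw]
      show (τ ^ 4) ^ m * τ ^ p = _
      group
    have h0 := hNzero _ (hform ▸ hwker)
    apply hwne
    rw [hform, h0, zpow_zero]
  · -- block case: conjugate into normal position
    obtain ⟨j, k, hjk, hr₁, hr₂⟩ := choose_jk p q
    set u : B₄ := θ ^ (-1 : ℤ) * τ ^ 2 * Δ * τ ^ (2 + j) with hu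
    set v : B₄ := θ ^ (-2 : ℤ) * τ ^ k * Δ * τ ^ 2 with hvdef
    have huv : u * v = 1 := by
      rw [hu, hvdef]
      simp only [mul_assoc, sθτ, sθΔ, sθθ, sττ, sθτ', sθΔ', sθθ', sττ']
      rw [show (2 + j) + k = 4 from by omega, τ4θ]
      simp only [sθτ, sθΔ, sθθ, sττ, sθτ', sθΔ', sθθ', sττ', sΔΔ, sΔΔ']
      rw [show (2 : ℕ) + 2 = 4 from rfl, τ4θ]
      simp only [sθτ, sθΔ, sθθ, sθτ', sθΔ', sθθ']
      norm_num
    have hv : v = u⁻¹ := eq_inv_of_mul_eq_one_right huv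
    refine ⟨u * w * v, ?_, ?_,
      m - 3 + (((2 + j + p) / 4 : ℕ) : ℤ) + (((q + k) / 4 : ℕ) : ℤ),
      ((2 + j + p) % 4) :: (L ++ [(q + k) % 4]), ?_, ?_⟩
    · rw [hv, MonoidHom.mem_ker, map_mul, map_mul, map_inv,
        show ψ w = 1 from hwker, mul_one, mul_inv_cancel]
    · rw [hv]
      intro hcon
      apply hwne
      have hrec : w = u⁻¹ * (u * w * u⁻¹) * u := by group
      rw [hcon] at hrec
      simpa using hrec
    · intro x hx
      simp only [List.mem_cons, List.mem_append, List.mem_singleton,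
        List.not_mem_nil, or_false] at hx
      have m1 : (2 + j + p) % 4 < 4 := Nat.mod_lt _ (by norm_num)
      have m2 : (q + k) % 4 < 4 := Nat.mod_lt _ (by norm_num)
      rcases hx with rfl | h | rfl
      · omega
      · exact hL x h
      · omega
    · show u * w * v = _ * τ ^ 2 * chain _ * Δ * τ ^ 2
      rw [hw, hu, hvdef, chain_cons, chain_append]
      have e₁ : τ ^ ((2 + j) + p)
          = θ ^ (((2 + j + p) / 4 : ℕ) : ℤ) * τ ^ ((2 + j + p) % 4) := by
        rw [← τ4u, ← pow_add]
        congr 1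
        omega
      have e₂ : τ ^ (q + k)
          = θ ^ (((q + k) / 4 : ℕ) : ℤ) * τ ^ ((q + k) % 4) := by
        rw [← τ4u, ← pow_add]
        congr 1
        omega
      simp only [mul_assoc, sθτ, sθΔ, sθC, sθθ, sττ, sθτ', sθΔ', sθC', sθθ', sττ',
        e₁, e₂]
      all_goals try (congr 1)
      all_goals try (congr 1)
      all_goals try omega
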